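/- Let (X,T) be an invertible topological dynamical system with Borel σ-algebra B, μ a T-ergodic Borel probability measure, and F a sub-σ-algebra of B with T^{-1}F ⊆ F, so that the σ-algebras F_n = T^{-n}F (n ≥ 0) form a decreasing sequence; let G = ⋂_{n≥0} F_n, ν_n = μ⊠_{F_n} μ and λ = μ⊠_G μ. Then: (i) ν_n(A×B) → λ(A×B) for all Borel sets A, B, and ν_n → λ weakly; (ii) for every closed subset F' of X×X with (T×T)F' ⊇ F' one has λ(F') ≥ ν_0(F'); (iii) for every open subset U of X×X with (T×T)U ⊆ U one has λ(U) ≤ ν_0(U). -/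

import Mathlib

open MeasureTheory Filter Topology Set
open scoped symmDiff Classical ENNReal NNReal InnerProductSpace
set_option maxHeartbeats 2000000
set_option synthInstance.maxHeartbeats 400000

section Defs

variable {X : Type*}

/-- The pair `(x, y)` is (positively) asymptotic for `T`. -/
def IsAsymptoticPair [PseudoMetricSpace X] (T : X → X) (x y : X) : Prop :=
  Tendsto (fun n : ℕ => dist (T^[n] x) (T^[n] y)) atTop (𝓝 0)

/-- Shannon entropy of the finite measurable partition of `X` given by the fibers of a
map `p` into a finite type. -/
noncomputable def partEntropy [MeasurableSpace X] (μ : Measure X) {ι : Type*} [Fintype ι]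
    (p : X → ι) : ℝ :=
  ∑ i : ι, Real.negMulLog (μ (p ⁻¹' {i})).toReal

/-- Conditional Shannon entropy `H(P | F)` of the finite partition given by the fibers
of `p` with respect to the sub-σ-algebra `F`:
`H(P|F) = ∑_{A ∈ P} ∫ -E(1_A|F) log E(1_A|F) dμ`. -/
noncomputable def condPartEntropy [MeasurableSpace X] (μ : Measure X)
    (F : MeasurableSpace X) {ι : Type*} [Fintype ι] (p : X → ι) : ℝ :=
  ∑ i : ι, ∫ x, Real.negMulLog ((μ[(p ⁻¹' {i}).indicator (fun _ => (1 : ℝ)) | F]) x) ∂μ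

/-- The σ-algebra `σ(P^-)` generated by the partitions `T^{-n}P`, `n ≥ 1`
(the "past" of the partition given by the fibers of `p`). -/
def partPast (T : X → X) {ι : Type*} (p : X → ι) : MeasurableSpace X :=
  ⨆ n : ℕ, MeasurableSpace.comap (fun x => p (T^[n + 1] x)) ⊤

/-- The σ-algebra `σ(P^T)` generated by the partitions `T^{-n}P`, `n ∈ ℤ`, where `S = T⁻¹`. -/
def partHull (T S : X → X) {ι : Type*} (p : X → ι) : MeasurableSpace X :=
  ⨆ n : ℕ,
    MeasurableSpace.comap (fun x => p (T^[n] x)) ⊤ ⊔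
      MeasurableSpace.comap (fun x => p (S^[n] x)) ⊤

/-- Kolmogorov–Sinai entropy of a finite partition: `h_μ(P, T) = H(P | P^-)`. -/
noncomputable def partKS [MeasurableSpace X] (μ : Measure X) (T : X → X) {ι : Type*}
    [Fintype ι] (p : X → ι) : ℝ :=
  condPartEntropy μ (partPast T p) p

/-- Kolmogorov–Sinai (measure-theoretic) entropy `h_μ(X, T)` of the system:
the supremum over all finite measurable partitions `P` of `h_μ(P, T)`. -/
noncomputable def ksEntropy [MeasurableSpace X] (μ : Measure X) (T : X → X) : ℝ≥0∞ :=
  ⨆ (k : ℕ) (p : X → Fin k) (_ : Measurable p), ENNReal.ofReal (partKS μ T p)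

/-- The Pinsker σ-algebra `Π_μ`: the σ-algebra generated by all finite measurable
partitions with zero Kolmogorov–Sinai entropy. -/
def pinskerAlg [MeasurableSpace X] (μ : Measure X) (T : X → X) : MeasurableSpace X :=
  ⨆ (k : ℕ) (p : X → Fin k) (_ : Measurable p) (_ : partKS μ T p = 0),
    MeasurableSpace.comap p ⊤

/-- Minimal cardinality of a subcover of `⋁_{i=0}^{n-1} T^{-i} C`, where `C` is a
finite cover of `X`. -/
noncomputable def coverNum (T : X → X) {k : ℕ} (C : Fin k → Set X) (n : ℕ) : ℕ :=
  sInf {m : ℕ | ∃ f : Fin m → Fin n → Fin k,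
    (⋃ j : Fin m, ⋂ i : Fin n, T^[(i : ℕ)] ⁻¹' C (f j i)) = Set.univ}

/-- Topological entropy of a finite cover `C`:
`h(C, T) = inf_n (1/n) log N(⋁_{i=0}^{n-1} T^{-i} C) = lim_n (1/n) log N(...)`. -/
noncomputable def coverEntropyOf (T : X → X) {k : ℕ} (C : Fin k → Set X) : ℝ :=
  ⨅ n : ℕ, Real.log (coverNum T C (n + 1)) / (n + 1)

/-- `(x, y)` is a topological entropy pair: `x ≠ y` and every two-set open cover
`{Uᶜ, Vᶜ}`, where `U` and `V` are disjoint closed neighbourhoods of `x` and `y`,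
has positive topological entropy. -/
def IsEntropyPair [TopologicalSpace X] (T : X → X) (x y : X) : Prop :=
  x ≠ y ∧ ∀ U V : Set X, IsClosed U → IsClosed V → U ∈ 𝓝 x → V ∈ 𝓝 y → Disjoint U V →
    0 < coverEntropyOf T ![Uᶜ, Vᶜ]

/-- `(x, y)` is an entropy pair for the invariant measure `μ`: `x ≠ y` and every two-set
Borel partition `(A, Aᶜ)` with `x ∈ interior A` and `y ∈ interior Aᶜ` has positive
entropy with respect to `T` and `μ`. -/
def IsMuEntropyPair [TopologicalSpace X] [MeasurableSpace X] (T : X → X) (μ : Measure X)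
    (x y : X) : Prop :=
  x ≠ y ∧ ∀ A : Set X, MeasurableSet A → x ∈ interior A → y ∈ interior Aᶜ →
    0 < partKS μ T (fun z => if z ∈ A then (0 : Fin 2) else 1)

/-- `ν` is the relatively independent square `μ ⊠_G μ` of `μ` over the sub-σ-algebra `G`:
it is determined by `ν(A × B) = ∫ E(1_A|G) · E(1_B|G) dμ` for all Borel sets `A`, `B`. -/
def IsCondSquare (G : MeasurableSpace X) [m0 : MeasurableSpace X] (μ : Measure X)
    (ν : Measure (X × X)) : Prop :=
  ∀ A B : Set X, MeasurableSet[m0] A → MeasurableSet[m0] B →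
    ν (A ×ˢ B) = ENNReal.ofReal
      (∫ x, (μ[A.indicator (fun _ => (1 : ℝ)) | G]) x *
            (μ[B.indicator (fun _ => (1 : ℝ)) | G]) x ∂μ)

/-- The σ-algebra `m₁` is contained in `m₂` modulo `μ`-null sets. -/
def SubModNull [MeasurableSpace X] (μ : Measure X) (m₁ m₂ : MeasurableSpace X) : Prop :=
  ∀ A : Set X, MeasurableSet[m₁] A → ∃ B : Set X, MeasurableSet[m₂] B ∧ μ (A ∆ B) = 0

end Defs

section Defs2

variable {X : Type*}

/-- The σ-algebra `F^- = ⋁_{n ≥ 1} T^{-n} F`. -/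
def pastAlg (T : X → X) (F : MeasurableSpace X) : MeasurableSpace X :=
  ⨆ n : ℕ, MeasurableSpace.comap (T^[n + 1]) F

/-- The σ-algebra `F^T = ⋁_{n ∈ ℤ} T^{-n} F`, where `S = T⁻¹`. -/
def hullAlg (T S : X → X) (F : MeasurableSpace X) : MeasurableSpace X :=
  ⨆ n : ℕ, MeasurableSpace.comap (T^[n]) F ⊔ MeasurableSpace.comap (S^[n]) F

/-- `P` is (the σ-algebra of) an *excellent* measurable partition for `(X, μ, T)` (here
`S = T⁻¹`): it is generating (`σ(P^T) = 𝒜` mod `μ`) and it is generated by an increasing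
sequence of finite measurable partitions `Pₙ ↑ P` with `H(Pₙ|Pₙ⁻) − H(Pₙ|P⁻) → 0`. -/
def IsExcellentPartition (P : MeasurableSpace X) [m0 : MeasurableSpace X] (μ : Measure X)
    (T S : X → X) : Prop :=
  P ≤ m0 ∧ SubModNull μ m0 (hullAlg T S P) ∧
  ∃ (m : ℕ → ℕ) (Q : ∀ n : ℕ, X → Fin (m n)),
    (∀ n, Measurable (Q n)) ∧
    Monotone (fun n => MeasurableSpace.comap (Q n) (⊤ : MeasurableSpace (Fin (m n)))) ∧
    (⨆ n : ℕ, MeasurableSpace.comap (Q n) (⊤ : MeasurableSpace (Fin (m n)))) = P ∧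
    Tendsto (fun n => condPartEntropy μ (partPast T (Q n)) (Q n) -
      condPartEntropy μ (pastAlg T P) (Q n)) atTop (𝓝 0)

end Defs2

section Aux
variable {α : Type*} {m0 : MeasurableSpace α} {μ : Measure α}

/-- A function that is a.e. strongly measurable w.r.t. every σ-algebra in an antitone
sequence is a.e. strongly measurable w.r.t. their infimum. -/
lemma aesm'_iInf {Fs : ℕ → MeasurableSpace α} (hanti : Antitone Fs) {h : α → ℝ}
    (hh : ∀ m, AEStronglyMeasurable[Fs m] h μ) :
    AEStronglyMeasurable[⨅ m, Fs m] h μ := by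
  choose g hgm hge using hh
  set G : α → ℝ := fun x => (Filter.limsup (fun m => ((g m x : EReal))) atTop).toReal with hGdef
  have hmeask : ∀ k, Measurable[Fs k] G := by
    intro k
    have : G = fun x => (Filter.limsup (fun m => ((g (m + k) x : EReal))) atTop).toReal := by
      funext x
      rw [hGdef]
      show (Filter.limsup (fun m => ((g m x : EReal))) atTop).toReal = _
      rw [← Filter.limsup_nat_add (fun m => ((g m x : EReal))) k]
    rw [this]
    apply Measurable.ereal_toReal
    apply Measurable.limsup
    intro i
    have h1 : Measurable[Fs k] (g (i + k)) :=
      ((hgm (i + k)).measurable).mono (hanti (Nat.le_add_left k i)) le_rfl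
    exact measurable_coe_real_ereal.comp h1
  refine ⟨G, ?_, ?_⟩
  · apply Measurable.stronglyMeasurable
    intro s hs
    rw [MeasurableSpace.measurableSet_iInf]
    exact fun k => hmeask k hs
  · have hae : ∀ᵐ x ∂μ, ∀ m, h x = g m x := ae_all_iff.2 hge
    filter_upwards [hae] with x hx
    have : (fun m => ((g m x : EReal))) = fun _ => ((h x : EReal)) := by
      funext m; rw [← hx m]
    rw [hGdef]
    show h x = (Filter.limsup (fun m => ((g m x : EReal))) atTop).toReal
    rw [this, Filter.limsup_const]
    exact (EReal.toReal_coe _).symm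

end Aux

section Aux2
variable {α : Type*} {m0 : MeasurableSpace α}

open scoped Classical in
/-- The element of `L²(μ)` associated to a function, or `0` if it is not in `L²`. -/
noncomputable def toL2 (μ : Measure α) (g : α → ℝ) : Lp ℝ 2 μ :=
  if h : MemLp g 2 μ then h.toLp g else 0

lemma toL2_coeFn {μ : Measure α} {g : α → ℝ} (h : MemLp g 2 μ) :
    (toL2 μ g : α → ℝ) =ᵐ[μ] g := by
  rw [toL2]
  rw [dif_pos h]
  exact h.coeFn_toLp

lemma inner_toL2 (μ : Measure α) (u v : Lp ℝ 2 μ) :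
    ⟪u, v⟫_ℝ = ∫ x, u x * v x ∂μ := by
  rw [MeasureTheory.L2.inner_def]
  simp [RCLike.inner_apply, RCLike.conj_to_real]
  exact integral_congr_ae (Eventually.of_forall fun x => mul_comm _ _)

end Aux2

section Core
variable {α : Type*} {m0 : MeasurableSpace α} (μ : Measure α) [IsProbabilityMeasure μ]

/-- Backward martingale convergence in `L²` for conditional expectations along an
antitone sequence of σ-algebras. -/
lemma tendsto_toL2_condexp (Fs : ℕ → MeasurableSpace α) (hle : ∀ n, Fs n ≤ m0)
    (hanti : Antitone Fs) {f : α → ℝ} (hfm : AEStronglyMeasurable f μ)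
    (hfb : ∀ᵐ x ∂μ, ‖f x‖ ≤ 1) :
    Tendsto (fun n => toL2 μ (μ[f|Fs n])) atTop (𝓝 (toL2 μ (μ[f|⨅ k, Fs k]))) := by
  have hGle : (⨅ k, Fs k) ≤ m0 := (iInf_le Fs 0).trans (hle 0)
  have hfb' : ∀ᵐ x ∂μ, |f x| ≤ ((1 : ℝ≥0) : ℝ) := by simpa [Real.norm_eq_abs] using hfb
  have hint : Integrable f μ :=
    memLp_one_iff_integrable.mp (MemLp.of_bound hfm 1 hfb)
  -- bounds and membership in L² for the conditional expectations
  have hbd : ∀ m : MeasurableSpace α, ∀ᵐ x ∂μ, ‖(μ[f|m]) x‖ ≤ 1 := fun m => by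
    simpa [Real.norm_eq_abs] using ae_bdd_condExp_of_ae_bdd (m := m) hfb'
  have hmem : ∀ (m : MeasurableSpace α), m ≤ m0 → MemLp (μ[f|m]) 2 μ := fun m hm =>
    MemLp.of_bound ((stronglyMeasurable_condExp.mono hm).aestronglyMeasurable) 1 (hbd m)
  set a : ℕ → α → ℝ := fun n => μ[f|Fs n] with ha
  set b : α → ℝ := μ[f|⨅ k, Fs k] with hb
  set A : ℕ → Lp ℝ 2 μ := fun n => toL2 μ (a n) with hA
  set Ainf : Lp ℝ 2 μ := toL2 μ b with hAinf
  have hAcoe : ∀ n, (A n : α → ℝ) =ᵐ[μ] a n := fun n => toL2_coeFn (hmem _ (hle n))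
  have hAinfcoe : (Ainf : α → ℝ) =ᵐ[μ] b := toL2_coeFn (hmem _ hGle)
  -- the pull-out identity
  have pull : ∀ (m : MeasurableSpace α), m ≤ m0 → ∀ v : α → ℝ, Integrable v μ →
      ∫ x, (μ[f|m]) x * v x ∂μ = ∫ x, (μ[f|m]) x * (μ[v|m]) x ∂μ := by
    intro m hm v hv
    have h1 : μ[(μ[f|m]) * v|m] =ᵐ[μ] (μ[f|m]) * μ[v|m] :=
      condExp_stronglyMeasurable_mul_of_bound hm stronglyMeasurable_condExp hv 1 (hbd m)
    calc ∫ x, (μ[f|m]) x * v x ∂μ = ∫ x, (μ[(μ[f|m]) * v|m]) x ∂μ := (integral_condExp hm).symm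
      _ = ∫ x, ((μ[f|m]) * μ[v|m]) x ∂μ := integral_congr_ae h1
      _ = _ := rfl
  -- inner product identities
  have I1 : ∀ m n, m ≤ n → ⟪A n, A m⟫_ℝ = ⟪A n, A n⟫_ℝ := by
    intro m n hmn
    rw [inner_toL2, inner_toL2]
    rw [integral_congr_ae (f := fun x => (A n : α → ℝ) x * (A m : α → ℝ) x) (g := fun x => a n x * a m x) ((hAcoe n).mul (hAcoe m)),
      integral_congr_ae (f := fun x => (A n : α → ℝ) x * (A n : α → ℝ) x) (g := fun x => a n x * a n x) ((hAcoe n).mul (hAcoe n))]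
    have h2 : μ[a m|Fs n] =ᵐ[μ] a n := condExp_condExp_of_le (hanti hmn) (hle m)
    calc ∫ x, a n x * a m x ∂μ = ∫ x, a n x * (μ[a m|Fs n]) x ∂μ :=
          pull (Fs n) (hle n) (a m) integrable_condExp
      _ = ∫ x, a n x * a n x ∂μ := integral_congr_ae ((ae_eq_refl _).mul h2)
  have I2 : ∀ n, ⟪Ainf, A n⟫_ℝ = ⟪Ainf, Ainf⟫_ℝ := by
    intro n
    rw [inner_toL2, inner_toL2]
    rw [integral_congr_ae (f := fun x => (Ainf : α → ℝ) x * (A n : α → ℝ) x) (g := fun x => b x * a n x) (hAinfcoe.mul (hAcoe n)),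
      integral_congr_ae (f := fun x => (Ainf : α → ℝ) x * (Ainf : α → ℝ) x) (g := fun x => b x * b x) (hAinfcoe.mul hAinfcoe)]
    have h2 : μ[a n|⨅ k, Fs k] =ᵐ[μ] b := condExp_condExp_of_le (iInf_le Fs n) (hle n)
    calc ∫ x, b x * a n x ∂μ = ∫ x, b x * (μ[a n|⨅ k, Fs k]) x ∂μ :=
          pull _ hGle (a n) integrable_condExp
      _ = ∫ x, b x * b x ∂μ := integral_congr_ae ((ae_eq_refl _).mul h2)
  set c : ℕ → ℝ := fun n => ⟪A n, A n⟫_ℝ with hc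
  set r : ℝ := ⟪Ainf, Ainf⟫_ℝ with hr
  have hdist : ∀ m n, m ≤ n → ‖A m - A n‖ ^ 2 = c m - c n := by
    intro m n hmn
    have e1 : ⟪A m, A n⟫_ℝ = c n := by rw [real_inner_comm]; exact I1 m n hmn
    have e2 : c m = ‖A m‖ ^ 2 := real_inner_self_eq_norm_sq (A m)
    have e3 : c n = ‖A n‖ ^ 2 := real_inner_self_eq_norm_sq (A n)
    have e4 := norm_sub_sq_real (A m) (A n)
    linarith
  have hdistinf : ∀ n, ‖Ainf - A n‖ ^ 2 = c n - r := by
    intro n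
    have e1 : ⟪Ainf, A n⟫_ℝ = r := I2 n
    have e2 : r = ‖Ainf‖ ^ 2 := real_inner_self_eq_norm_sq Ainf
    have e3 : c n = ‖A n‖ ^ 2 := real_inner_self_eq_norm_sq (A n)
    have e4 := norm_sub_sq_real Ainf (A n)
    linarith
  have hanti_c : Antitone c := by
    intro m n hmn
    have := hdist m n hmn
    nlinarith [sq_nonneg ‖A m - A n‖]
  have hlb : ∀ n, r ≤ c n := by
    intro n
    have := hdistinf n
    nlinarith [sq_nonneg ‖Ainf - A n‖]
  have hbdd : BddBelow (Set.range c) := ⟨r, by rintro x ⟨n, rfl⟩; exact hlb n⟩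
  set L : ℝ := ⨅ n, c n with hL
  have hcL : Tendsto c atTop (𝓝 L) := tendsto_atTop_ciInf hanti_c hbdd
  have hLle : ∀ N, L ≤ c N := fun N => ciInf_le hbdd N
  -- Cauchy sequence
  have hcauchy : CauchySeq A := by
    apply cauchySeq_of_le_tendsto_0 (fun N => Real.sqrt (c N - L))
    · intro n m N hn hm
      have key : dist (A n) (A m) ^ 2 ≤ c N - L := by
        rcases le_total n m with h | h
        · have := hdist n m h
          rw [dist_eq_norm]
          nlinarith [hanti_c hn, hLle m]
        · have := hdist m n h
          rw [dist_comm, dist_eq_norm]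
          nlinarith [hanti_c hm, hLle n]
      have h0 : (0 : ℝ) ≤ dist (A n) (A m) := dist_nonneg
      exact (Real.le_sqrt h0 (by linarith [hLle N, hanti_c hn])).mpr key
    · have : Tendsto (fun N => c N - L) atTop (𝓝 0) := by
        simpa using hcL.sub (tendsto_const_nhds (x := L))
      have := (Real.continuous_sqrt.tendsto 0).comp this
      simpa [Function.comp_def] using this
  obtain ⟨H, hH⟩ := cauchySeq_tendsto_of_complete hcauchy
  -- identification of the limit
  have hHk : ∀ k, AEStronglyMeasurable[Fs k] (H : α → ℝ) μ := by
    intro k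
    have hclosed : IsClosed {u : Lp ℝ 2 μ | AEStronglyMeasurable[Fs k] u μ} :=
      isClosed_aestronglyMeasurable (hle k)
    have hmemk : ∀ᶠ n in atTop, A n ∈ {u : Lp ℝ 2 μ | AEStronglyMeasurable[Fs k] u μ} := by
      filter_upwards [eventually_ge_atTop k] with n hn
      exact ⟨a n, stronglyMeasurable_condExp.mono (hanti hn), hAcoe n⟩
    exact hclosed.mem_of_tendsto hH hmemk
  have hHinf : AEStronglyMeasurable[⨅ k, Fs k] (H : α → ℝ) μ := aesm'_iInf hanti hHk
  have hHint : Integrable (H : α → ℝ) μ := (Lp.memLp H).integrable one_le_two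
  have hset : ∀ s, MeasurableSet[⨅ k, Fs k] s →
      ∫ x in s, (H : α → ℝ) x ∂μ = ∫ x in s, f x ∂μ := by
    intro s hs
    have hs0 : MeasurableSet[m0] s := hGle s hs
    have hIsmem : MemLp (s.indicator fun _ => (1 : ℝ)) 2 μ :=
      MemLp.of_bound ((stronglyMeasurable_const.indicator hs0).aestronglyMeasurable) 1
        (Eventually.of_forall fun x => by
          simpa using norm_indicator_le_norm_self (fun _ => (1 : ℝ)) x)
    set Is : Lp ℝ 2 μ := toL2 μ (s.indicator fun _ => (1 : ℝ)) with hIs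
    have hIscoe : (Is : α → ℝ) =ᵐ[μ] s.indicator fun _ => (1 : ℝ) := toL2_coeFn hIsmem
    have hinner : ∀ (u : Lp ℝ 2 μ) (g : α → ℝ), (u : α → ℝ) =ᵐ[μ] g →
        ⟪u, Is⟫_ℝ = ∫ x in s, g x ∂μ := by
      intro u g hg
      rw [inner_toL2, integral_congr_ae (f := fun x => (u : α → ℝ) x * (Is : α → ℝ) x) (g := fun x => g x * (s.indicator fun _ => (1 : ℝ)) x) (hg.mul hIscoe)]
      have : (fun x => g x * (s.indicator fun _ => (1 : ℝ)) x) = s.indicator g := by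
        funext x
        by_cases hx : x ∈ s <;>
          simp [Set.indicator_of_mem, Set.indicator_of_notMem, hx]
      rw [this, integral_indicator hs0]
    have hconst : ∀ n, ⟪A n, Is⟫_ℝ = ∫ x in s, f x ∂μ := by
      intro n
      rw [hinner (A n) (a n) (hAcoe n)]
      exact setIntegral_condExp (hle n) hint ((iInf_le Fs n) s hs)
    have htend : Tendsto (fun n => ⟪A n, Is⟫_ℝ) atTop (𝓝 ⟪H, Is⟫_ℝ) :=
      hH.inner tendsto_const_nhds
    have htend' : Tendsto (fun _ : ℕ => ∫ x in s, f x ∂μ) atTop (𝓝 ⟪H, Is⟫_ℝ) := by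
      simpa [hconst] using htend
    have := tendsto_nhds_unique htend' tendsto_const_nhds
    rw [← hinner H (H : α → ℝ) (ae_eq_refl _), this]
  have hHb : (H : α → ℝ) =ᵐ[μ] b := by
    have : SigmaFinite (μ.trim hGle) := by infer_instance
    exact ae_eq_condExp_of_forall_setIntegral_eq hGle hint
      (fun s _ _ => hHint.integrableOn) (fun s hs _ => hset s hs) hHinf
  have : H = Ainf := Lp.ext (hHb.trans hAinfcoe.symm)
  rwa [this] at hH

end Core

section Core2
variable {α : Type*} {m0 : MeasurableSpace α} (μ : Measure α) [IsProbabilityMeasure μ]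

/-- Convergence of the integrals of products of conditional expectations along an
antitone sequence of σ-algebras. -/
lemma tendsto_integral_condExp_mul (Fs : ℕ → MeasurableSpace α) (hle : ∀ n, Fs n ≤ m0)
    (hanti : Antitone Fs) {f g : α → ℝ} (hfm : AEStronglyMeasurable f μ)
    (hfb : ∀ᵐ x ∂μ, ‖f x‖ ≤ 1) (hgm : AEStronglyMeasurable g μ)
    (hgb : ∀ᵐ x ∂μ, ‖g x‖ ≤ 1) :
    Tendsto (fun n => ∫ x, (μ[f|Fs n]) x * (μ[g|Fs n]) x ∂μ) atTop
      (𝓝 (∫ x, (μ[f|⨅ k, Fs k]) x * (μ[g|⨅ k, Fs k]) x ∂μ)) := by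
  have hGle : (⨅ k, Fs k) ≤ m0 := (iInf_le Fs 0).trans (hle 0)
  have hmem : ∀ (u : α → ℝ), AEStronglyMeasurable u μ → (∀ᵐ x ∂μ, ‖u x‖ ≤ 1) →
      ∀ (m : MeasurableSpace α), m ≤ m0 → MemLp (μ[u|m]) 2 μ := by
    intro u hum hub m hm
    have hub' : ∀ᵐ x ∂μ, |u x| ≤ ((1 : ℝ≥0) : ℝ) := by simpa [Real.norm_eq_abs] using hub
    refine MemLp.of_bound ((stronglyMeasurable_condExp.mono hm).aestronglyMeasurable) 1 ?_
    simpa [Real.norm_eq_abs] using ae_bdd_condExp_of_ae_bdd (m := m) hub'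
  have h1 := tendsto_toL2_condexp μ Fs hle hanti hfm hfb
  have h2 := tendsto_toL2_condexp μ Fs hle hanti hgm hgb
  have h3 : Tendsto (fun n => ⟪toL2 μ (μ[f|Fs n]), toL2 μ (μ[g|Fs n])⟫_ℝ) atTop
      (𝓝 ⟪toL2 μ (μ[f|⨅ k, Fs k]), toL2 μ (μ[g|⨅ k, Fs k])⟫_ℝ) := h1.inner h2
  have key : ∀ (m : MeasurableSpace α), m ≤ m0 →
      ⟪toL2 μ (μ[f|m]), toL2 μ (μ[g|m])⟫_ℝ = ∫ x, (μ[f|m]) x * (μ[g|m]) x ∂μ := by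
    intro m hm
    rw [inner_toL2]
    exact integral_congr_ae ((toL2_coeFn (hmem f hfm hfb m hm)).mul
      (toL2_coeFn (hmem g hgm hgb m hm)))
  rw [key _ hGle] at h3
  exact h3.congr fun n => key _ (hle n)

end Core2

section Core3
-- `Fm` is declared before `m0` so that instance resolution prefers `m0`.
variable {α : Type*} {Fm m0 : MeasurableSpace α} (μ : Measure α) [IsProbabilityMeasure μ]

/-- Conditional expectation commutes with composition by a measure preserving
measurable embedding, exchanging a σ-algebra with its comap. -/
lemma condexp_comp_comap {φ : α → α} (hφ : MeasurePreserving φ μ μ)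
    (hφe : MeasurableEmbedding φ) (hF : Fm ≤ m0)
    {g : α → ℝ} (hg : Integrable g μ) :
    (fun x => (μ[g|Fm]) (φ x)) =ᵐ[μ] μ[g ∘ φ | MeasurableSpace.comap φ Fm] := by
  have hcle : MeasurableSpace.comap φ Fm ≤ m0 := by
    rintro s ⟨t, ht, rfl⟩
    exact hφ.measurable (hF t ht)
  have hgφ : Integrable (g ∘ φ) μ := (hφ.integrable_comp hg.aestronglyMeasurable).mpr hg
  refine ae_eq_condExp_of_forall_setIntegral_eq hcle hgφ ?_ ?_ ?_
  · intro s _ _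
    have : Integrable (fun x => (μ[g|Fm]) (φ x)) μ :=
      (hφ.integrable_comp (stronglyMeasurable_condExp.mono hF).aestronglyMeasurable).mpr
        integrable_condExp
    exact this.integrableOn
  · rintro s ⟨t, ht, rfl⟩ _
    rw [hφ.setIntegral_preimage_emb hφe]
    rw [setIntegral_condExp hF hg ht]
    exact (hφ.setIntegral_preimage_emb hφe g t).symm
  · have hmeas : Measurable[Fm] (μ[g|Fm]) := stronglyMeasurable_condExp.measurable
    refine ⟨fun x => (μ[g|Fm]) (φ x), ?_, ae_eq_refl _⟩
    apply Measurable.stronglyMeasurable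
    intro s hs
    exact ⟨(μ[g|Fm]) ⁻¹' s, hmeas hs, rfl⟩

end Core3

/-- (`Construction C`.) Let `μ` be a `T`-ergodic measure, `F` a
sub-σ-algebra with `T⁻¹F ⊆ F`, `F_n = T^{-n}F`, `G = ⋂_n F_n`, `ν_n = μ ⊠_{F_n} μ` and
`λ = μ ⊠_G μ`. Then: (i) `ν_n(A × B) → λ(A × B)` for all Borel `A`, `B`, and `ν_n → λ`
weakly; (ii) `λ(F') ≥ ν_0(F')` for every closed `F' ⊆ X × X` with `(T×T)F' ⊇ F'`;
(iii) `λ(U) ≤ ν_0(U)` for every open `U ⊆ X × X` with `(T×T)U ⊆ U`. -/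
theorem condSquare_construction_C
    {X : Type*} (F : MeasurableSpace X) [MetricSpace X] [CompactSpace X]
    [m0 : MeasurableSpace X] [BorelSpace X]
    (μ : Measure X) [IsProbabilityMeasure μ] (T : X ≃ₜ X) (herg : Ergodic (⇑T) μ)
    (hF : F ≤ m0) (hFdec : MeasurableSpace.comap (⇑T) F ≤ F)
    (ν : ℕ → Measure (X × X))
    (hν : ∀ n : ℕ, IsCondSquare (MeasurableSpace.comap ((⇑T)^[n]) F) μ (ν n))
    (lam : Measure (X × X))
    (hlam : IsCondSquare (⨅ n : ℕ, MeasurableSpace.comap ((⇑T)^[n]) F) μ lam) :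
    (∀ A B : Set X, MeasurableSet A → MeasurableSet B →
      Tendsto (fun n : ℕ => ν n (A ×ˢ B)) atTop (𝓝 (lam (A ×ˢ B)))) ∧
    (∀ f : X × X → ℝ, Continuous f →
      Tendsto (fun n : ℕ => ∫ p, f p ∂(ν n)) atTop (𝓝 (∫ p, f p ∂lam))) ∧
    (∀ F' : Set (X × X), IsClosed F' → F' ⊆ Prod.map (⇑T) (⇑T) '' F' → ν 0 F' ≤ lam F') ∧
    (∀ U : Set (X × X), IsOpen U → Prod.map (⇑T) (⇑T) '' U ⊆ U → lam U ≤ ν 0 U) := by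
  haveI : SecondCountableTopology X := inferInstance
  -- the decreasing sequence of σ-algebras
  have hsucc : ∀ n, MeasurableSpace.comap ((⇑T)^[n + 1]) F ≤ MeasurableSpace.comap ((⇑T)^[n]) F := by
    intro n
    have h1 : (⇑T)^[n + 1] = (⇑T)^[n] ∘ (⇑T) := Function.iterate_succ _ _
    have h2 : (⇑T)^[n + 1] = (⇑T) ∘ (⇑T)^[n] := Function.iterate_succ' _ _
    rw [h2, ← MeasurableSpace.comap_comp]
    exact MeasurableSpace.comap_mono hFdec
  have hanti : Antitone (fun n => MeasurableSpace.comap ((⇑T)^[n]) F) :=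
    antitone_nat_of_succ_le hsucc
  have hF0 : MeasurableSpace.comap ((⇑T)^[0]) F = F := by
    simp [MeasurableSpace.comap_id]
  have hle : ∀ n, MeasurableSpace.comap ((⇑T)^[n]) F ≤ m0 := fun n =>
    ((hanti (Nat.zero_le n)).trans hF0.le).trans hF
  have hGle : (⨅ n, MeasurableSpace.comap ((⇑T)^[n]) F) ≤ m0 :=
    (iInf_le _ 0).trans (hle 0)
  -- measurability of iterates
  have hTmeas : Measurable (⇑T) := T.continuous.measurable
  have hSmeas : Measurable (⇑T.symm) := T.symm.continuous.measurable
  have hTn : ∀ n, Measurable ((⇑T)^[n]) := fun n => hTmeas.iterate n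
  have hSn : ∀ n, Measurable ((⇑T.symm)^[n]) := fun n => hSmeas.iterate n
  have hTne : ∀ n, MeasurableEmbedding ((⇑T)^[n]) := by
    intro n
    induction n with
    | zero => simpa using MeasurableEmbedding.id
    | succ n ih =>
      rw [Function.iterate_succ']
      exact (T.toMeasurableEquiv.measurableEmbedding).comp ih
  have hMP : ∀ n, MeasurePreserving ((⇑T)^[n]) μ μ := fun n =>
    herg.toMeasurePreserving.iterate n
  -- indicators
  have hind_m : ∀ {A : Set X}, MeasurableSet A →
      AEStronglyMeasurable (A.indicator fun _ => (1 : ℝ)) μ := fun hA =>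
    (stronglyMeasurable_const.indicator hA).aestronglyMeasurable
  have hind_b : ∀ (A : Set X), ∀ᵐ x ∂μ, ‖A.indicator (fun _ => (1 : ℝ)) x‖ ≤ 1 := by
    intro A
    refine Eventually.of_forall fun x => ?_
    have := norm_indicator_le_norm_self (fun _ => (1 : ℝ)) (s := A) x
    simpa using this
  have hind_int : ∀ {A : Set X}, MeasurableSet A →
      Integrable (A.indicator fun _ => (1 : ℝ)) μ :=
    fun hA => (integrable_const (1 : ℝ)).indicator hA
  -- probability instances
  have hν1 : ∀ n, IsProbabilityMeasure (ν n) := by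
    intro n
    constructor
    have h := hν n univ univ MeasurableSet.univ MeasurableSet.univ
    rw [univ_prod_univ] at h
    rw [h, Set.indicator_univ, condExp_const (hle n)]
    simp
  have hlam1 : IsProbabilityMeasure lam := by
    constructor
    have h := hlam univ univ MeasurableSet.univ MeasurableSet.univ
    rw [univ_prod_univ] at h
    rw [h, Set.indicator_univ, condExp_const hGle]
    simp
  haveI := hlam1
  haveI := fun n => hν1 n
  -- (i) first part: convergence on rectangles
  have hrect : ∀ A B : Set X, MeasurableSet A → MeasurableSet B →
      Tendsto (fun n : ℕ => ν n (A ×ˢ B)) atTop (𝓝 (lam (A ×ˢ B))) := by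
    intro A B hA hB
    have h := tendsto_integral_condExp_mul μ (fun n => MeasurableSpace.comap ((⇑T)^[n]) F)
      hle hanti (hind_m hA) (hind_b A) (hind_m hB) (hind_b B)
    have h2 := (ENNReal.continuous_ofReal.tendsto _).comp h
    have h3 : Tendsto (fun n => ν n (A ×ˢ B)) atTop
        (𝓝 (ENNReal.ofReal (∫ x, (μ[A.indicator (fun _ => (1:ℝ)) |
            ⨅ k, MeasurableSpace.comap ((⇑T)^[k]) F]) x *
          (μ[B.indicator (fun _ => (1:ℝ)) | ⨅ k, MeasurableSpace.comap ((⇑T)^[k]) F]) x ∂μ))) := by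
      refine h2.congr fun n => ?_
      exact (hν n A B hA hB).symm
    rwa [← hlam A B hA hB] at h3
  -- transport of ν n to ν 0
  have hrect0 : ∀ (n : ℕ) (A B : Set X), MeasurableSet A → MeasurableSet B →
      ν n (A ×ˢ B) = ν 0 (((⇑T.symm)^[n] ⁻¹' A) ×ˢ ((⇑T.symm)^[n] ⁻¹' B)) := by
    intro n A B hA hB
    have hA' : MeasurableSet ((⇑T.symm)^[n] ⁻¹' A) := hSn n hA
    have hB' : MeasurableSet ((⇑T.symm)^[n] ⁻¹' B) := hSn n hB
    rw [hν n A B hA hB, hν 0 _ _ hA' hB', hF0]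
    congr 1
    have hLI : ∀ x : X, (⇑T.symm)^[n] ((⇑T)^[n] x) = x :=
      Function.LeftInverse.iterate (fun y => T.symm_apply_apply y) n
    have hcomp : ∀ (A : Set X),
        (((⇑T.symm)^[n] ⁻¹' A).indicator (fun _ => (1:ℝ))) ∘ (⇑T)^[n] =
          A.indicator (fun _ => (1:ℝ)) := by
      intro A
      funext x
      by_cases hx : x ∈ A <;>
        simp [Function.comp, Set.indicator, Set.mem_preimage, hLI x, hx]
    have e1 := condexp_comp_comap μ (hMP n) (hTne n) hF (hind_int hA')
    have e2 := condexp_comp_comap μ (hMP n) (hTne n) hF (hind_int hB')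
    rw [hcomp A] at e1
    rw [hcomp B] at e2
    calc ∫ x, (μ[A.indicator (fun _ => (1:ℝ)) | MeasurableSpace.comap ((⇑T)^[n]) F]) x *
          (μ[B.indicator (fun _ => (1:ℝ)) | MeasurableSpace.comap ((⇑T)^[n]) F]) x ∂μ
        = ∫ x, (μ[((⇑T.symm)^[n] ⁻¹' A).indicator (fun _ => (1:ℝ)) | F]) ((⇑T)^[n] x) *
            (μ[((⇑T.symm)^[n] ⁻¹' B).indicator (fun _ => (1:ℝ)) | F]) ((⇑T)^[n] x) ∂μ :=
          integral_congr_ae (e1.symm.mul e2.symm)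
      _ = ∫ y, (μ[((⇑T.symm)^[n] ⁻¹' A).indicator (fun _ => (1:ℝ)) | F]) y *
            (μ[((⇑T.symm)^[n] ⁻¹' B).indicator (fun _ => (1:ℝ)) | F]) y ∂μ :=
          (hMP n).integral_comp (hTne n)
            (fun y => (μ[((⇑T.symm)^[n] ⁻¹' A).indicator (fun _ => (1:ℝ)) | F]) y *
              (μ[((⇑T.symm)^[n] ⁻¹' B).indicator (fun _ => (1:ℝ)) | F]) y)
  -- ν n as pushforward of ν 0
  have hQmeas : ∀ n, Measurable (Prod.map ((⇑T.symm)^[n]) ((⇑T.symm)^[n])) := fun n =>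
    (hSn n).prodMap (hSn n)
  have hmap : ∀ n, ν n = Measure.map (Prod.map ((⇑T.symm)^[n]) ((⇑T.symm)^[n])) (ν 0) := by
    intro n
    refine ext_of_generate_finite _ generateFrom_prod.symm isPiSystem_prod ?_ ?_
    · rintro s ⟨A, hA, B, hB, rfl⟩
      simp only [Set.mem_setOf_eq] at hA hB
      rw [Measure.map_apply (hQmeas n) (hA.prod hB), Set.preimage_prod_map_prod]
      exact hrect0 n A B hA hB
    · rw [Measure.map_apply (hQmeas n) MeasurableSet.univ]
      simp
  -- images and preimages under the product map
  have hPn : ∀ n, (Prod.map (⇑T) (⇑T))^[n] = Prod.map ((⇑T)^[n]) ((⇑T)^[n]) := by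
    intro n
    induction n with
    | zero => simp [Prod.map_id]
    | succ n ih =>
      funext p
      simp [Function.iterate_succ', ih, Prod.map]
  have hQP : ∀ n (S : Set (X × X)),
      Prod.map ((⇑T.symm)^[n]) ((⇑T.symm)^[n]) ⁻¹' S = (Prod.map (⇑T) (⇑T))^[n] '' S := by
    intro n S
    rw [hPn n]
    refine (congrFun (Set.image_eq_preimage_of_inverse ?_ ?_) S).symm
    · intro p
      have h1 : (⇑T.symm)^[n] ((⇑T)^[n] p.1) = p.1 :=
        Function.LeftInverse.iterate (fun y => T.symm_apply_apply y) n p.1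
      have h2 : (⇑T.symm)^[n] ((⇑T)^[n] p.2) = p.2 :=
        Function.LeftInverse.iterate (fun y => T.symm_apply_apply y) n p.2
      simp [Prod.map, h1, h2]
    · intro p
      have h1 : (⇑T)^[n] ((⇑T.symm)^[n] p.1) = p.1 :=
        Function.RightInverse.iterate (fun y => T.apply_symm_apply y) n p.1
      have h2 : (⇑T)^[n] ((⇑T.symm)^[n] p.2) = p.2 :=
        Function.RightInverse.iterate (fun y => T.apply_symm_apply y) n p.2
      simp [Prod.map, h1, h2]
  have hνn_eq : ∀ n (S : Set (X × X)), MeasurableSet S →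
      ν n S = ν 0 ((Prod.map (⇑T) (⇑T))^[n] '' S) := by
    intro n S hS
    rw [hmap n, Measure.map_apply (hQmeas n) hS, hQP n S]
  -- unions of rectangles
  set SL : List (Set X × Set X) → Set (X × X) :=
    fun l => l.foldr (fun p s => p.1 ×ˢ p.2 ∪ s) ∅ with hSL
  have hSL_nil : SL [] = ∅ := rfl
  have hSL_cons : ∀ p l, SL (p :: l) = p.1 ×ˢ p.2 ∪ SL l := fun p l => rfl
  have hSL_meas : ∀ l : List (Set X × Set X),
      (∀ p ∈ l, MeasurableSet p.1 ∧ MeasurableSet p.2) → MeasurableSet (SL l) := by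
    intro l
    induction l with
    | nil => intro _; rw [hSL_nil]; exact MeasurableSet.empty
    | cons p t ih =>
      intro h
      rw [hSL_cons]
      exact ((h p (List.mem_cons_self)).1.prod (h p (List.mem_cons_self)).2).union
        (ih fun q hq => h q (List.mem_cons_of_mem p hq))
  have hSL_inter : ∀ (l : List (Set X × Set X)) (R : Set X × Set X),
      SL l ∩ (R.1 ×ˢ R.2) = SL (l.map (fun q => (q.1 ∩ R.1, q.2 ∩ R.2))) := by
    intro l R
    induction l with
    | nil => simp [hSL_nil]
    | cons p t ih =>
      rw [List.map_cons, hSL_cons, hSL_cons, Set.union_inter_distrib_right, ih,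
        Set.prod_inter_prod]
  have hSL_subset : ∀ (l : List (Set X × Set X)) (U : Set (X × X)),
      (∀ p ∈ l, p.1 ×ˢ p.2 ⊆ U) → SL l ⊆ U := by
    intro l U
    induction l with
    | nil => intro _; rw [hSL_nil]; exact Set.empty_subset U
    | cons p t ih =>
      intro h
      rw [hSL_cons]
      exact Set.union_subset (h p (List.mem_cons_self))
        (ih fun q hq => h q (List.mem_cons_of_mem p hq))
  have hSL_mem : ∀ (l : List (Set X × Set X)) (p : Set X × Set X), p ∈ l →
      p.1 ×ˢ p.2 ⊆ SL l := by
    intro l p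
    induction l with
    | nil => intro h; exact absurd h (List.not_mem_nil)
    | cons q t ih =>
      intro h
      rw [hSL_cons]
      rcases List.mem_cons.mp h with h | h
      · rw [h]; exact Set.subset_union_left
      · exact (ih h).trans Set.subset_union_right
  have hSL_append : ∀ l1 l2 : List (Set X × Set X), SL (l1 ++ l2) = SL l1 ∪ SL l2 := by
    intro l1 l2
    induction l1 with
    | nil => simp [hSL_nil]
    | cons p t ih => rw [List.cons_append, hSL_cons, hSL_cons, ih, Set.union_assoc]
  -- convergence on finite unions of rectangles
  have hconv_list : ∀ (k : ℕ) (l : List (Set X × Set X)), l.length ≤ k →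
      (∀ p ∈ l, MeasurableSet p.1 ∧ MeasurableSet p.2) →
      Tendsto (fun n => ν n (SL l)) atTop (𝓝 (lam (SL l))) := by
    intro k
    induction k with
    | zero =>
      intro l hl _
      have : l = [] := List.length_eq_zero_iff.mp (Nat.le_zero.mp hl)
      subst this
      rw [hSL_nil]
      simp only [measure_empty]
      exact tendsto_const_nhds
    | succ k ih =>
      intro l hl hm
      match l with
      | [] =>
        rw [hSL_nil]
        simp only [measure_empty]
        exact tendsto_const_nhds
      | p :: t =>
        have hp := hm p (List.mem_cons_self)
        have ht : ∀ q ∈ t, MeasurableSet q.1 ∧ MeasurableSet q.2 :=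
          fun q hq => hm q (List.mem_cons_of_mem p hq)
        have hlen : t.length ≤ k := Nat.succ_le_succ_iff.mp hl
        have hl'len : (t.map (fun q => (q.1 ∩ p.1, q.2 ∩ p.2))).length ≤ k := by
          simpa using hlen
        have hl'm : ∀ q ∈ t.map (fun q => (q.1 ∩ p.1, q.2 ∩ p.2)),
            MeasurableSet q.1 ∧ MeasurableSet q.2 := by
          intro q hq
          obtain ⟨q0, hq0, rfl⟩ := List.mem_map.mp hq
          exact ⟨(ht q0 hq0).1.inter hp.1, (ht q0 hq0).2.inter hp.2⟩
        have hp_t : Tendsto (fun n => ν n (p.1 ×ˢ p.2)) atTop (𝓝 (lam (p.1 ×ˢ p.2))) :=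
          hrect p.1 p.2 hp.1 hp.2
        have hT := ih t hlen ht
        have hI := ih _ hl'len hl'm
        have hinter : p.1 ×ˢ p.2 ∩ SL t = SL (t.map (fun q => (q.1 ∩ p.1, q.2 ∩ p.2))) := by
          rw [Set.inter_comm]
          exact hSL_inter t p
        have hMeq : ∀ (κ : Measure (X × X)), IsProbabilityMeasure κ →
            κ (SL (p :: t)) = κ (p.1 ×ˢ p.2) + κ (SL t) -
              κ (SL (t.map (fun q => (q.1 ∩ p.1, q.2 ∩ p.2)))) := by
          intro κ hκ
          have h1 := measure_union_add_inter (μ := κ) (p.1 ×ˢ p.2) (hSL_meas t ht)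
          rw [hinter] at h1
          rw [hSL_cons]
          exact ENNReal.eq_sub_of_add_eq (measure_ne_top κ _) h1
        have htendsto : Tendsto (fun n => ν n (p.1 ×ˢ p.2) + ν n (SL t) -
            ν n (SL (t.map (fun q => (q.1 ∩ p.1, q.2 ∩ p.2))))) atTop
            (𝓝 (lam (p.1 ×ˢ p.2) + lam (SL t) -
              lam (SL (t.map (fun q => (q.1 ∩ p.1, q.2 ∩ p.2)))))) := by
          refine ENNReal.Tendsto.sub (hp_t.add hT) hI (Or.inl ?_)
          exact ENNReal.add_ne_top.mpr ⟨measure_ne_top _ _, measure_ne_top _ _⟩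
        have h2 : Tendsto (fun n => ν n (SL (p :: t))) atTop
            (𝓝 (lam (p.1 ×ˢ p.2) + lam (SL t) -
              lam (SL (t.map (fun q => (q.1 ∩ p.1, q.2 ∩ p.2)))))) := by
          refine htendsto.congr fun n => ?_
          exact (hMeq (ν n) (hν1 n)).symm
        rw [← hMeq lam hlam1] at h2
        exact h2
  -- open sets: liminf bound
  have hopen : ∀ U : Set (X × X), IsOpen U → lam U ≤ liminf (fun n => ν n U) atTop := by
    intro U hU
    obtain ⟨B1, hB1c, -, hB1basis⟩ := TopologicalSpace.exists_countable_basis X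
    set 𝒮 : Set (Set X × Set X) :=
      {p | p.1 ∈ B1 ∧ p.2 ∈ B1 ∧ p.1 ×ˢ p.2 ⊆ U} with h𝒮
    have h𝒮c : 𝒮.Countable := by
      refine Set.Countable.mono ?_ (hB1c.prod hB1c)
      rintro p ⟨h1, h2, -⟩
      exact ⟨h1, h2⟩
    have hU_eq : U = ⋃ p ∈ 𝒮, p.1 ×ˢ p.2 := by
      apply Set.Subset.antisymm
      · intro z hz
        obtain ⟨u, v, hu, hv, hzu, hzv, huv⟩ := isOpen_prod_iff.mp hU z.1 z.2 hz
        obtain ⟨s, hsB, hzs, hsu⟩ := hB1basis.exists_subset_of_mem_open hzu hu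
        obtain ⟨t, htB, hzt, htv⟩ := hB1basis.exists_subset_of_mem_open hzv hv
        refine Set.mem_biUnion (show (s, t) ∈ 𝒮 from ⟨hsB, htB, ?_⟩) ?_
        · exact (Set.prod_mono hsu htv).trans huv
        · exact ⟨hzs, hzt⟩
      · refine Set.iUnion₂_subset fun p hp => hp.2.2
    rcases Set.eq_empty_or_nonempty 𝒮 with h𝒮e | h𝒮ne
    · rw [hU_eq, h𝒮e]
      simp
    obtain ⟨e, he⟩ := h𝒮c.exists_eq_range h𝒮ne
    have he𝒮 : ∀ i, e i ∈ 𝒮 := fun i => by rw [he]; exact Set.mem_range_self i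
    have hemeas : ∀ i, MeasurableSet (e i).1 ∧ MeasurableSet (e i).2 := fun i =>
      ⟨(hB1basis.isOpen (he𝒮 i).1).measurableSet, (hB1basis.isOpen (he𝒮 i).2.1).measurableSet⟩
    set V : ℕ → Set (X × X) := fun k => SL ((List.range k).map e) with hV
    have hVmono : Monotone V := by
      apply monotone_nat_of_le_succ
      intro k
      rw [hV]
      simp only []
      rw [List.range_succ, List.map_append, hSL_append]
      exact Set.subset_union_left
    have hVU : ∀ k, V k ⊆ U := by
      intro k
      apply hSL_subset
      intro p hp
      obtain ⟨i, -, rfl⟩ := List.mem_map.mp hp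
      exact (he𝒮 i).2.2
    have hUV : U = ⋃ k, V k := by
      apply Set.Subset.antisymm
      · rw [hU_eq]
        refine Set.iUnion₂_subset fun p hp => ?_
        rw [he] at hp
        obtain ⟨i, rfl⟩ := hp
        refine Set.subset_iUnion_of_subset (i + 1) ?_
        apply hSL_mem
        exact List.mem_map.mpr ⟨i, List.mem_range.mpr (Nat.lt_succ_self i), rfl⟩
      · exact Set.iUnion_subset hVU
    have hVconv : ∀ k, Tendsto (fun n => ν n (V k)) atTop (𝓝 (lam (V k))) := by
      intro k
      apply hconv_list ((List.range k).map e).length _ le_rfl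
      intro p hp
      obtain ⟨i, -, rfl⟩ := List.mem_map.mp hp
      exact hemeas i
    have hVle : ∀ k, lam (V k) ≤ liminf (fun n => ν n U) atTop := by
      intro k
      have h1 : liminf (fun n => ν n (V k)) atTop = lam (V k) := (hVconv k).liminf_eq
      rw [← h1]
      exact liminf_le_liminf (Eventually.of_forall fun n => measure_mono (hVU k))
    have hlamU : Tendsto (fun k => lam (V k)) atTop (𝓝 (lam U)) := by
      rw [hUV]
      exact tendsto_measure_iUnion_atTop hVmono
    exact le_of_tendsto hlamU (Eventually.of_forall hVle)
  -- conclusion (i), weak convergence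
  have hweak : ∀ f : X × X → ℝ, Continuous f →
      Tendsto (fun n : ℕ => ∫ p, f p ∂(ν n)) atTop (𝓝 (∫ p, f p ∂lam)) := by
    intro f hf
    set νP : ℕ → ProbabilityMeasure (X × X) := fun n => ⟨ν n, hν1 n⟩ with hνP
    set lamP : ProbabilityMeasure (X × X) := ⟨lam, hlam1⟩ with hlamP
    have h_opens : ∀ G : Set (X × X), IsOpen G →
        lamP G ≤ liminf (fun i => νP i G) atTop := by
      intro G hG
      have haux : (↑(liminf (fun i => νP i G) atTop) : ℝ≥0∞) =
          liminf (fun i => (νP i G : ℝ≥0∞)) atTop := by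
        refine Monotone.map_liminf_of_continuousAt (F := atTop) ENNReal.coe_mono
          (fun i => νP i G) ENNReal.continuous_coe.continuousAt ?_ ?_
        · exact IsBoundedUnder.isCoboundedUnder_ge ⟨1, by simp⟩
        · exact ⟨0, by simp⟩
      rw [← ENNReal.coe_le_coe, haux]
      have h1 : ∀ i, (νP i G : ℝ≥0∞) = ν i G := fun i =>
        ProbabilityMeasure.ennreal_coeFn_eq_coeFn_toMeasure (νP i) G
      have h2 : (lamP G : ℝ≥0∞) = lam G :=
        ProbabilityMeasure.ennreal_coeFn_eq_coeFn_toMeasure lamP G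
      rw [h2]
      refine le_trans (hopen G hG) ?_
      refine le_of_eq ?_
      exact liminf_congr (Eventually.of_forall fun i => (h1 i).symm)
    have htends : Tendsto νP atTop (𝓝 lamP) :=
      MeasureTheory.tendsto_of_forall_isOpen_le_liminf h_opens
    have hbc := ProbabilityMeasure.tendsto_iff_forall_integral_tendsto.mp htends
      (BoundedContinuousFunction.mkOfCompact ⟨f, hf⟩)
    simp at hbc
    exact hbc
  refine ⟨hrect, hweak, ?_, ?_⟩
  -- (ii) closed invariant sets
  · intro F' hF' hF'sub
    have hFm : MeasurableSet F' := hF'.measurableSet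
    have hsub : ∀ n, F' ⊆ (Prod.map (⇑T) (⇑T))^[n] '' F' := by
      intro n
      induction n with
      | zero => simp
      | succ n ih =>
        rw [Function.iterate_succ']
        calc F' ⊆ Prod.map (⇑T) (⇑T) '' F' := hF'sub
          _ ⊆ Prod.map (⇑T) (⇑T) '' ((Prod.map (⇑T) (⇑T))^[n] '' F') := Set.image_mono ih
          _ = _ := (Set.image_comp _ _ _).symm
    have h1 : ∀ n, ν 0 F' ≤ ν n F' := by
      intro n
      rw [hνn_eq n F' hFm]
      exact measure_mono (hsub n)
    have h2 : lam F'ᶜ ≤ liminf (fun n => ν n F'ᶜ) atTop := hopen F'ᶜ hF'.isOpen_compl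
    have h3 : ∀ n, ν n F'ᶜ ≤ 1 - ν 0 F' := by
      intro n
      rw [prob_compl_eq_one_sub hFm]
      exact tsub_le_tsub_left (h1 n) 1
    have h4 : liminf (fun n => ν n F'ᶜ) atTop ≤ 1 - ν 0 F' := by
      refine le_trans (liminf_le_liminf (Eventually.of_forall h3)) ?_
      simp [liminf_const]
    have h5 : lam F' = 1 - lam F'ᶜ := by
      rw [prob_compl_eq_one_sub hFm, ENNReal.sub_sub_cancel ENNReal.one_ne_top prob_le_one]
    rw [h5]
    calc ν 0 F' = 1 - (1 - ν 0 F') :=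
          (ENNReal.sub_sub_cancel ENNReal.one_ne_top prob_le_one).symm
      _ ≤ 1 - liminf (fun n => ν n F'ᶜ) atTop := tsub_le_tsub_left h4 1
      _ ≤ 1 - lam F'ᶜ := tsub_le_tsub_left (h2.trans (le_refl _)) 1
  -- (iii) open invariant sets
  · intro U hU hUsub
    have hUm : MeasurableSet U := hU.measurableSet
    have hsub : ∀ n, (Prod.map (⇑T) (⇑T))^[n] '' U ⊆ U := by
      intro n
      induction n with
      | zero => simp
      | succ n ih =>
        rw [Function.iterate_succ']
        calc Prod.map (⇑T) (⇑T) ∘ (Prod.map (⇑T) (⇑T))^[n] '' U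
            = Prod.map (⇑T) (⇑T) '' ((Prod.map (⇑T) (⇑T))^[n] '' U) := Set.image_comp _ _ _
          _ ⊆ Prod.map (⇑T) (⇑T) '' U := Set.image_mono ih
          _ ⊆ U := hUsub
    have h1 : ∀ n, ν n U ≤ ν 0 U := by
      intro n
      rw [hνn_eq n U hUm]
      exact measure_mono (hsub n)
    refine le_trans (hopen U hU) ?_
    refine le_trans (liminf_le_liminf (Eventually.of_forall h1)) ?_
    simp [liminf_const]
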